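/- Let n ≥ 1 be an integer, j ∈ {1, …, n}, c ∈ ℝ, and let a, b, M : ℝ → [0, ∞] be measurable functions. Then ∫_{ℝ⁴} a(r₁) b(r₂) a(r₃) b(r₄) · M(r₁ − r₃)^{n−j} · M(r₂ − r₄)^{n−j} · M(r₁ − r₂ + c)^{j} · M(r₃ − r₄ + c)^{j} dr₁ dr₂ dr₃ dr₄ ≤ (∫_{ℝ²} a(u) a(v) M(u − v)^n du dv)^{1 − j/n} · (∫_{ℝ²} b(u) b(v) M(u − v)^n du dv)^{1 − j/n} · (∫_{ℝ²} a(u) b(v) M(u − v + c)^n du dv)^{2j/n}, where all integrals are Lebesgue integrals of nonnegative functions (possibly infinite). -/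

import Mathlib

open MeasureTheory
open scoped ENNReal

/-- Two-function Hölder for lower integrals with exponents `α + β = 1`. -/
lemma holder_aux {X : Type*} [MeasurableSpace X] (μ : Measure X) {f g : X → ℝ≥0∞}
    (hf : Measurable f) (hg : Measurable g) {α β : ℝ} (hα : 0 ≤ α) (hβ : 0 ≤ β)
    (hab : α + β = 1) :
    ∫⁻ x, f x ^ α * g x ^ β ∂μ ≤ (∫⁻ x, f x ∂μ) ^ α * (∫⁻ x, g x ∂μ) ^ β := by
  rcases eq_or_lt_of_le hα with hα0 | hα
  · have hβ1 : β = 1 := by linarith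
    simp [← hα0, hβ1]
  rcases eq_or_lt_of_le hβ with hβ0 | hβ
  · have hα1 : α = 1 := by linarith
    simp [← hβ0, hα1]
  · have hα1 : α < 1 := by linarith
    have hpq : (1 / α).HolderConjugate (1 / β) := by
      rw [Real.holderConjugate_iff]
      constructor
      · rw [one_div]
        exact (one_lt_inv₀ hα |>.mpr hα1 : 1 < α⁻¹)
      · simp only [one_div, inv_inv]
        exact hab
    have h := ENNReal.lintegral_mul_le_Lp_mul_Lq μ hpq
      (f := fun x => f x ^ α) (g := fun x => g x ^ β)
      ((hf.pow_const α).aemeasurable) ((hg.pow_const β).aemeasurable)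
    have h1 : ∀ x, (f x ^ α) ^ α⁻¹ = f x := fun x => by
      rw [← ENNReal.rpow_mul, mul_inv_cancel₀ hα.ne', ENNReal.rpow_one]
    have h2 : ∀ x, (g x ^ β) ^ β⁻¹ = g x := fun x => by
      rw [← ENNReal.rpow_mul, mul_inv_cancel₀ hβ.ne', ENNReal.rpow_one]
    simpa only [Pi.mul_apply, one_div, inv_inv, h1, h2] using h

/-- Hölder-type estimate: for `1 ≤ j ≤ n`, `c ∈ ℝ`, and measurable `a, b, M : ℝ → [0,∞]`,
`∫_{ℝ⁴} a(r₁)b(r₂)a(r₃)b(r₄) M(r₁−r₃)^{n−j} M(r₂−r₄)^{n−j} M(r₁−r₂+c)^j M(r₃−r₄+c)^j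
≤ (∫∫ a a M^n)^{1−j/n} (∫∫ b b M^n)^{1−j/n} (∫∫ a b M(·+c)^n)^{2j/n}`. -/
theorem quadruple_integral_holder_bound
    (n j : ℕ) (hn : 1 ≤ n) (hj : 1 ≤ j) (hjn : j ≤ n) (c : ℝ)
    (a b M : ℝ → ℝ≥0∞) (ha : Measurable a) (hb : Measurable b) (hM : Measurable M) :
    (∫⁻ r₁ : ℝ, ∫⁻ r₂ : ℝ, ∫⁻ r₃ : ℝ, ∫⁻ r₄ : ℝ,
        a r₁ * b r₂ * a r₃ * b r₄ * M (r₁ - r₃) ^ (n - j) * M (r₂ - r₄) ^ (n - j) *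
          M (r₁ - r₂ + c) ^ j * M (r₃ - r₄ + c) ^ j) ≤
      (∫⁻ u : ℝ, ∫⁻ v : ℝ, a u * a v * M (u - v) ^ n) ^ (1 - (j : ℝ) / (n : ℝ)) *
        (∫⁻ u : ℝ, ∫⁻ v : ℝ, b u * b v * M (u - v) ^ n) ^ (1 - (j : ℝ) / (n : ℝ)) *
        (∫⁻ u : ℝ, ∫⁻ v : ℝ, a u * b v * M (u - v + c) ^ n) ^ (2 * (j : ℝ) / (n : ℝ)) := by
  have hn0 : (n : ℝ) ≠ 0 := Nat.cast_ne_zero.mpr (by omega)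
  set α : ℝ := 1 - (j : ℝ) / (n : ℝ) with hαdef
  set β : ℝ := (j : ℝ) / (n : ℝ) with hβdef
  have hβ : 0 ≤ β := by positivity
  have hα : 0 ≤ α := by
    have : (j : ℝ) / n ≤ 1 := by
      rw [div_le_one (by positivity)]
      exact_mod_cast hjn
    simp [hαdef]; linarith
  have hab : α + β = 1 := by simp [hαdef, hβdef]
  -- pow conversion lemmas
  have hpow1 : ∀ x : ℝ≥0∞, (x ^ n) ^ α = x ^ (n - j) := fun x => by
    rw [← ENNReal.rpow_natCast x n, ← ENNReal.rpow_mul, ← ENNReal.rpow_natCast x (n - j)]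
    congr 1
    rw [Nat.cast_sub hjn, hαdef, mul_sub, mul_one, mul_div_cancel₀ _ hn0]
  have hpow2 : ∀ x : ℝ≥0∞, (x ^ n) ^ β = x ^ j := fun x => by
    rw [← ENNReal.rpow_natCast x n, ← ENNReal.rpow_mul, ← ENNReal.rpow_natCast x j]
    congr 1
    rw [hβdef]
    field_simp
  have hsplit : ∀ x : ℝ≥0∞, x ^ α * x ^ β = x := fun x => by
    rw [← ENNReal.rpow_add_of_nonneg _ _ hα hβ, hab, ENNReal.rpow_one]
  -- pointwise identity
  have key : ∀ x y z w : ℝ,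
      a x * b y * a z * b w * M (x - z) ^ (n - j) * M (y - w) ^ (n - j) *
          M (x - y + c) ^ j * M (z - w + c) ^ j
        = (a x * a z * M (x - z) ^ n) ^ α * (a x * b y * M (x - y + c) ^ n) ^ β *
          ((b y * b w * M (y - w) ^ n) ^ α * (a z * b w * M (z - w + c) ^ n) ^ β) := by
    intro x y z w
    simp only [ENNReal.mul_rpow_of_nonneg _ _ hα, ENNReal.mul_rpow_of_nonneg _ _ hβ,
      hpow1, hpow2]
    conv_lhs => rw [← hsplit (a x), ← hsplit (b y), ← hsplit (a z), ← hsplit (b w)]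
    ring
  -- measurability helpers
  have hfy : ∀ x, Measurable fun y => a x * a y * M (x - y) ^ n := fun x =>
    (measurable_const.mul ha).mul ((hM.comp (measurable_const.sub measurable_id)).pow_const n)
  have hgy : ∀ x, Measurable fun y => b x * b y * M (x - y) ^ n := fun x =>
    (measurable_const.mul hb).mul ((hM.comp (measurable_const.sub measurable_id)).pow_const n)
  have hhy : ∀ x, Measurable fun y => a x * b y * M (x - y + c) ^ n := fun x =>
    (measurable_const.mul hb).mul
      ((hM.comp ((measurable_const.sub measurable_id).add_const c)).pow_const n)
  have hF : Measurable fun x => ∫⁻ y, a x * a y * M (x - y) ^ n :=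
    Measurable.lintegral_prod_right' (f := fun p : ℝ × ℝ => a p.1 * a p.2 * M (p.1 - p.2) ^ n)
      (((ha.comp measurable_fst).mul (ha.comp measurable_snd)).mul
        ((hM.comp (measurable_fst.sub measurable_snd)).pow_const n))
  have hG : Measurable fun x => ∫⁻ y, b x * b y * M (x - y) ^ n :=
    Measurable.lintegral_prod_right' (f := fun p : ℝ × ℝ => b p.1 * b p.2 * M (p.1 - p.2) ^ n)
      (((hb.comp measurable_fst).mul (hb.comp measurable_snd)).mul
        ((hM.comp (measurable_fst.sub measurable_snd)).pow_const n))
  have hH : Measurable fun x => ∫⁻ y, a x * b y * M (x - y + c) ^ n :=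
    Measurable.lintegral_prod_right' (f := fun p : ℝ × ℝ => a p.1 * b p.2 * M (p.1 - p.2 + c) ^ n)
      (((ha.comp measurable_fst).mul (hb.comp measurable_snd)).mul
        ((hM.comp ((measurable_fst.sub measurable_snd).add_const c)).pow_const n))
  calc
    (∫⁻ x : ℝ, ∫⁻ y : ℝ, ∫⁻ z : ℝ, ∫⁻ w : ℝ,
        a x * b y * a z * b w * M (x - z) ^ (n - j) * M (y - w) ^ (n - j) *
          M (x - y + c) ^ j * M (z - w + c) ^ j)
      = ∫⁻ x : ℝ, ∫⁻ y : ℝ, ∫⁻ z : ℝ, ∫⁻ w : ℝ,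
          (a x * a z * M (x - z) ^ n) ^ α * (a x * b y * M (x - y + c) ^ n) ^ β *
            ((b y * b w * M (y - w) ^ n) ^ α * (a z * b w * M (z - w + c) ^ n) ^ β) := by
        simp only [key]
    _ ≤ ∫⁻ x : ℝ, ∫⁻ y : ℝ, ∫⁻ z : ℝ,
          (a x * a z * M (x - z) ^ n) ^ α * (a x * b y * M (x - y + c) ^ n) ^ β *
            ((∫⁻ v, b y * b v * M (y - v) ^ n) ^ α *
              (∫⁻ v, a z * b v * M (z - v + c) ^ n) ^ β) := by
        refine lintegral_mono fun x => lintegral_mono fun y => lintegral_mono fun z => ?_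
        rw [lintegral_const_mul _ (((hgy y).pow_const α).fun_mul ((hhy z).pow_const β))]
        gcongr
        exact holder_aux volume (hgy y) (hhy z) hα hβ hab
    _ ≤ ∫⁻ x : ℝ, ∫⁻ y : ℝ,
          (a x * b y * M (x - y + c) ^ n) ^ β * (∫⁻ v, b y * b v * M (y - v) ^ n) ^ α *
            ((∫⁻ v, a x * a v * M (x - v) ^ n) ^ α *
              (∫⁻ u, ∫⁻ v, a u * b v * M (u - v + c) ^ n) ^ β) := by
        refine lintegral_mono fun x => lintegral_mono fun y => ?_
        calc
          (∫⁻ z : ℝ, (a x * a z * M (x - z) ^ n) ^ α * (a x * b y * M (x - y + c) ^ n) ^ β *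
              ((∫⁻ v, b y * b v * M (y - v) ^ n) ^ α *
                (∫⁻ v, a z * b v * M (z - v + c) ^ n) ^ β))
            = (a x * b y * M (x - y + c) ^ n) ^ β * (∫⁻ v, b y * b v * M (y - v) ^ n) ^ α *
                ∫⁻ z : ℝ, (a x * a z * M (x - z) ^ n) ^ α *
                  (∫⁻ v, a z * b v * M (z - v + c) ^ n) ^ β := by
              rw [← lintegral_const_mul _ (((hfy x).pow_const α).fun_mul (hH.pow_const β))]
              exact lintegral_congr fun z => by ring
          _ ≤ _ := by
              gcongr
              exact holder_aux volume (hfy x) hH hα hβ hab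
    _ ≤ ∫⁻ x : ℝ,
          (∫⁻ v, a x * a v * M (x - v) ^ n) ^ α *
            (∫⁻ u, ∫⁻ v, a u * b v * M (u - v + c) ^ n) ^ β *
            ((∫⁻ u, ∫⁻ v, b u * b v * M (u - v) ^ n) ^ α *
              (∫⁻ v, a x * b v * M (x - v + c) ^ n) ^ β) := by
        refine lintegral_mono fun x => ?_
        calc
          (∫⁻ y : ℝ, (a x * b y * M (x - y + c) ^ n) ^ β *
              (∫⁻ v, b y * b v * M (y - v) ^ n) ^ α *
              ((∫⁻ v, a x * a v * M (x - v) ^ n) ^ α *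
                (∫⁻ u, ∫⁻ v, a u * b v * M (u - v + c) ^ n) ^ β))
            = (∫⁻ v, a x * a v * M (x - v) ^ n) ^ α *
                (∫⁻ u, ∫⁻ v, a u * b v * M (u - v + c) ^ n) ^ β *
                ∫⁻ y : ℝ, (∫⁻ v, b y * b v * M (y - v) ^ n) ^ α *
                  (a x * b y * M (x - y + c) ^ n) ^ β := by
              rw [← lintegral_const_mul _ ((hG.pow_const α).fun_mul ((hhy x).pow_const β))]
              exact lintegral_congr fun y => by ring
          _ ≤ _ := by
              gcongr
              exact holder_aux volume hG (hhy x) hα hβ hab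
    _ = (∫⁻ u, ∫⁻ v, a u * b v * M (u - v + c) ^ n) ^ β *
          (∫⁻ u, ∫⁻ v, b u * b v * M (u - v) ^ n) ^ α *
          ∫⁻ x : ℝ, (∫⁻ v, a x * a v * M (x - v) ^ n) ^ α *
            (∫⁻ v, a x * b v * M (x - v + c) ^ n) ^ β := by
        rw [← lintegral_const_mul _ ((hF.pow_const α).fun_mul (hH.pow_const β))]
        exact lintegral_congr fun x => by ring
    _ ≤ (∫⁻ u, ∫⁻ v, a u * b v * M (u - v + c) ^ n) ^ β *
          (∫⁻ u, ∫⁻ v, b u * b v * M (u - v) ^ n) ^ α *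
          ((∫⁻ u, ∫⁻ v, a u * a v * M (u - v) ^ n) ^ α *
            (∫⁻ u, ∫⁻ v, a u * b v * M (u - v + c) ^ n) ^ β) := by
        gcongr
        exact holder_aux volume hF hH hα hβ hab
    _ = (∫⁻ u : ℝ, ∫⁻ v : ℝ, a u * a v * M (u - v) ^ n) ^ α *
          (∫⁻ u : ℝ, ∫⁻ v : ℝ, b u * b v * M (u - v) ^ n) ^ α *
          (∫⁻ u : ℝ, ∫⁻ v : ℝ, a u * b v * M (u - v + c) ^ n) ^ (2 * (j : ℝ) / (n : ℝ)) := by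
        rw [show 2 * (j : ℝ) / (n : ℝ) = β + β by rw [hβdef]; ring,
          ENNReal.rpow_add_of_nonneg _ _ hβ hβ]
        ring
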